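/- With n = 2m, m even, and f = (1/2) ∑_{i=0}^{m} (−1)^i x_i x_{m−i}, one has π_{m,n}(Δ_n^m(f)) = (((2p)!)^2 / 2) · x_0^2 · ∑_{i=0}^{2p} (−1)^i C(2p,i) C(4p−i,2p) C(2p+i,i), where m = 2p and Δ_n := ∑_{k=0}^{n−1} (n−k)(k+1) x_{k+1} ∂/∂x_k. -/

import Mathlib

open MvPolynomial Finset
open Fin.NatCast

noncomputable def Dw (K : Type) [CommRing K] (n : ℕ) :
    Derivation K (MvPolynomial (Fin (n + 1)) K) (MvPolynomial (Fin (n + 1)) K) :=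
  MvPolynomial.mkDerivation K fun i =>
    if i.1 = 0 then 0 else
      MvPolynomial.X ⟨i.1 - 1, Nat.lt_of_le_of_lt (Nat.sub_le _ _) i.isLt⟩

noncomputable def piHom (K : Type) [CommRing K] (m n : ℕ) :
    MvPolynomial (Fin (n + 1)) K →ₐ[K] MvPolynomial (Fin (m + 1)) K :=
  MvPolynomial.aeval fun i : Fin (n + 1) =>
    if i.1 < n - m then 0 else MvPolynomial.X ((i.1 - (n - m) : ℕ) : Fin (m + 1))

noncomputable def Δw (K : Type) [CommRing K] (n : ℕ) :
    Derivation K (MvPolynomial (Fin (n + 1)) K) (MvPolynomial (Fin (n + 1)) K) :=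
  MvPolynomial.mkDerivation K fun k =>
    (((n - k.1) * (k.1 + 1) : ℕ) : K) •
      if h : k.1 < n then MvPolynomial.X ⟨k.1 + 1, Nat.succ_lt_succ h⟩ else 0

/- ## Auxiliary lemmas -/

section Aux

theorem iter_leibniz {R A : Type*} [CommRing R] [CommRing A] [Algebra R A]
    (D : Derivation R A A) (n : ℕ) (p q : A) :
    (⇑D)^[n] (p * q) =
      ∑ k ∈ range n.succ, (n.choose k • ((⇑D)^[n - k] p * (⇑D)^[k] q)) := by
  induction n with
  | zero => simp [Finset.range]
  | succ n IH =>
    calc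
      (⇑D)^[n + 1] (p * q) =
          D (∑ k ∈ range n.succ,
              n.choose k • ((⇑D)^[n - k] p * (⇑D)^[k] q)) := by
        rw [Function.iterate_succ_apply', IH]
      _ = (∑ k ∈ range n.succ,
            n.choose k • ((⇑D)^[n - k + 1] p * (⇑D)^[k] q)) +
          ∑ k ∈ range n.succ,
            n.choose k • ((⇑D)^[n - k] p * (⇑D)^[k + 1] q) := by
        rw [map_sum]
        simp_rw [map_nsmul, Derivation.leibniz, smul_eq_mul, Function.iterate_succ_apply',
          smul_add, sum_add_distrib]
        rw [add_comm]
        congr 1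
        · exact sum_congr rfl fun k hk => by rw [mul_comm]
      _ = (∑ k ∈ range n.succ,
                n.choose k.succ • ((⇑D)^[n - k] p * (⇑D)^[k + 1] q)) +
              1 • ((⇑D)^[n + 1] p * (⇑D)^[0] q) +
            ∑ k ∈ range n.succ, n.choose k • ((⇑D)^[n - k] p * (⇑D)^[k + 1] q) := ?_
      _ = (((∑ k ∈ range n.succ, n.choose k • ((⇑D)^[n - k] p * (⇑D)^[k + 1] q)) +
              ∑ k ∈ range n.succ,
                n.choose k.succ • ((⇑D)^[n - k] p * (⇑D)^[k + 1] q)) +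
            1 • ((⇑D)^[n + 1] p * (⇑D)^[0] q)) := by
        rw [add_comm, add_assoc]
      _ = (∑ i ∈ range n.succ,
              (n + 1).choose (i + 1) • ((⇑D)^[n + 1 - (i + 1)] p * (⇑D)^[i + 1] q)) +
            1 • ((⇑D)^[n + 1] p * (⇑D)^[0] q) := by
        simp_rw [Nat.choose_succ_succ, Nat.succ_sub_succ, add_smul, sum_add_distrib]
      _ = ∑ k ∈ range n.succ.succ,
            n.succ.choose k • ((⇑D)^[n.succ - k] p * (⇑D)^[k] q) := by
        rw [sum_range_succ' _ n.succ, Nat.choose_zero_right, tsub_zero]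
    congr
    refine (sum_range_succ' _ _).trans (congr_arg₂ (· + ·) ?_ ?_)
    · rw [sum_range_succ, Nat.choose_succ_self, zero_smul, add_zero]
      refine sum_congr rfl fun k hk => ?_
      rw [mem_range] at hk
      congr
      omega
    · rw [Nat.choose_zero_right, tsub_zero]

lemma iter_smul {R A : Type*} [CommRing R] [CommRing A] [Algebra R A]
    (D : Derivation R A A) (k : ℕ) (c : R) (x : A) :
    (⇑D)^[k] (c • x) = c • (⇑D)^[k] x := by
  induction k generalizing x with
  | zero => rfl
  | succ k IH =>
    rw [Function.iterate_succ_apply, Function.iterate_succ_apply, Derivation.map_smul, IH]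

lemma iter_sum {R A : Type*} [CommRing R] [CommRing A] [Algebra R A]
    (D : Derivation R A A) (k : ℕ) {ι : Type*} (s : Finset ι) (f : ι → A) :
    (⇑D)^[k] (∑ i ∈ s, f i) = ∑ i ∈ s, (⇑D)^[k] (f i) := by
  induction k generalizing f with
  | zero => rfl
  | succ k IH =>
    rw [Function.iterate_succ_apply, map_sum, IH]
    exact Finset.sum_congr rfl fun i _ => by rw [Function.iterate_succ_apply]

variable (K : Type) [Field K] [CharZero K]

lemma Δw_X (n i : ℕ) (h : i < n) :
    Δw K n (X ((i : ℕ) : Fin (n+1))) =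
      (((n - i) * (i + 1) : ℕ) : K) • X ((i + 1 : ℕ) : Fin (n+1)) := by
  have hv : ((i : Fin (n+1)) : ℕ) = i := Fin.val_cast_of_lt (by omega)
  rw [Δw, mkDerivation_X]
  simp only [hv]
  rw [dif_pos h]
  congr 2
  exact Fin.ext (Fin.val_cast_of_lt (show i+1 < n+1 by omega)).symm

/-- coefficient of iterated raising -/
def cc (n i a : ℕ) : ℕ := ∏ t ∈ range a, (n - (i + t)) * (i + t + 1)

lemma iterX (n : ℕ) : ∀ a i : ℕ, i + a ≤ n →
    (⇑(Δw K n))^[a] (X ((i : ℕ) : Fin (n+1))) =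
      ((cc n i a : ℕ) : K) • X ((i + a : ℕ) : Fin (n+1)) := by
  intro a
  induction a with
  | zero => intro i hi; simp [cc]
  | succ a IH =>
    intro i hi
    rw [Function.iterate_succ_apply, Δw_X K n i (by omega)]
    have hcc : cc n i (a+1) = (n - i) * (i + 1) * cc n (i+1) a := by
      rw [cc, Finset.prod_range_succ']
      simp only [add_zero]
      rw [mul_comm, cc]
      congr 1
      exact Finset.prod_congr rfl fun t _ => by ring_nf
    have hidx : i + (a + 1) = i + 1 + a := by omega
    rw [iter_smul, IH (i+1) (by omega), smul_smul, hidx, hcc]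
    push_cast
    ring_nf

lemma piHom_X (m j : ℕ) (hj : j ≤ 2*m) :
    piHom K m (2*m) (X ((j : ℕ) : Fin (2*m+1))) =
      if j < m then 0 else X ((j - m : ℕ) : Fin (m+1)) := by
  have hv : ((j : Fin (2*m+1)) : ℕ) = j := Fin.val_cast_of_lt (by omega)
  rw [piHom, aeval_X]
  simp only [hv]
  have h2 : 2*m - m = m := by omega
  rw [h2]

lemma descProd (N a : ℕ) : ∏ t ∈ range a, (N - t) = N.descFactorial a := by
  induction a with
  | zero => simp
  | succ a IH => rw [prod_range_succ, IH, Nat.descFactorial_succ, mul_comm]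

lemma ascProd (i a : ℕ) : ∏ t ∈ range a, (i + t + 1) = (i + a).descFactorial a := by
  rw [← descProd]
  rw [← Finset.prod_range_reflect (fun t => (i + a - t)) a]
  exact Finset.prod_congr rfl fun t ht => by
    rw [Finset.mem_range] at ht; omega

lemma cc_eq (n i a : ℕ) : cc n i a = (n - i).descFactorial a * (i + a).descFactorial a := by
  rw [cc, prod_mul_distrib, ← ascProd, ← descProd]
  congr 1
  exact Finset.prod_congr rfl fun t _ => by omega

lemma cast_descFactorial {N a : ℕ} (h : a ≤ N) :
    (N.descFactorial a : K) = (N.factorial : K) / ((N - a).factorial : K) := by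
  have h2 := congrArg (Nat.cast : ℕ → K) (Nat.factorial_mul_descFactorial h)
  push_cast at h2
  have hne : ((N - a).factorial : K) ≠ 0 := by exact_mod_cast Nat.factorial_ne_zero _
  field_simp
  rw [mul_comm]
  exact h2

-- the key per-term identity
lemma key (m i : ℕ) (hi : i ≤ m) :
    ((m.choose i : K) * (cc (2*m) i (m - i) : K)) * (cc (2*m) (m-i) i : K)
      = ((m.factorial : K))^2 * (m.choose i : K) * ((2*m - i).choose m : K) *
        ((m + i).choose i : K) := by
  have h1 : cc (2*m) i (m-i) = (2*m - i).descFactorial (m-i) * m.descFactorial (m-i) := by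
    rw [cc_eq]; congr 2 <;> omega
  have h2 : cc (2*m) (m-i) i = (m + i).descFactorial i * m.descFactorial i := by
    rw [cc_eq]; congr 2 <;> omega
  rw [h1, h2]
  push_cast
  rw [cast_descFactorial K (show m - i ≤ 2*m - i by omega),
      cast_descFactorial K (show m - i ≤ m by omega),
      cast_descFactorial K (show i ≤ m + i by omega),
      cast_descFactorial K (show i ≤ m by omega),
      Nat.cast_choose K (show i ≤ m by omega),
      Nat.cast_choose K (show m ≤ 2*m - i by omega),
      Nat.cast_choose K (show i ≤ m + i by omega)]
  have e1 : 2*m - i - (m - i) = m := by omega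
  have e2 : m - (m - i) = i := by omega
  have e3 : m + i - i = m := by omega
  have e4 : 2*m - i - m = m - i := by omega
  rw [e1, e2, e3, e4]
  have f0 : (Nat.factorial m : K) ≠ 0 := by exact_mod_cast Nat.factorial_ne_zero m
  have f1 : (Nat.factorial i : K) ≠ 0 := by exact_mod_cast Nat.factorial_ne_zero i
  have f2 : (Nat.factorial (m-i) : K) ≠ 0 := by exact_mod_cast Nat.factorial_ne_zero (m-i)
  field_simp

theorem main (m : ℕ) :
    piHom K m (2 * m)
        ((⇑(Δw K (2 * m)))^[m]
          ((1 / 2 : K) • ∑ i ∈ Finset.range (m + 1),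
            ((-1 : K) ^ i) •
              (X ((i : ℕ) : Fin (2 * m + 1)) * X ((m - i : ℕ) : Fin (2 * m + 1)))))
      = MvPolynomial.C (((m.factorial : K)) ^ 2 / 2 *
            ∑ i ∈ Finset.range (m + 1),
              ((-1 : K) ^ i * (m.choose i : K) * ((2 * m - i).choose m : K) *
                ((m + i).choose i : K))) *
          X ((0 : ℕ) : Fin (m + 1)) ^ 2 := by
  rw [iter_smul, iter_sum, map_smul, map_sum]
  have hterm : ∀ i ∈ range (m+1),
      piHom K m (2*m) ((⇑(Δw K (2*m)))^[m]
        ((-1:K)^i • (X ((i : ℕ) : Fin (2*m+1)) * X ((m - i : ℕ) : Fin (2*m+1)))))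
      = ((-1:K)^i * (((m.choose i : K) * (cc (2*m) i (m-i) : K)) * (cc (2*m) (m-i) i : K)))
          • X ((0:ℕ) : Fin (m+1)) ^ 2 := by
    intro i hi
    rw [mem_range] at hi
    rw [iter_smul, map_smul, iter_leibniz, map_sum]
    rw [Finset.sum_eq_single i ?f1 ?f2]
    case f1 =>
      intro k hk hki
      rw [mem_range] at hk
      rw [iterX K (2*m) (m-k) i (by omega), iterX K (2*m) k (m-i) (by omega),
        map_nsmul, map_mul, map_smul, map_smul,
        piHom_X K m (i + (m-k)) (by omega), piHom_X K m ((m-i) + k) (by omega)]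
      rcases hki.lt_or_gt with h | h
      · simp [show (m-i)+k < m by omega]
      · simp [show i+(m-k) < m by omega]
    case f2 =>
      intro h
      exact absurd (mem_range.2 (by omega)) h
    -- the k = i term
    rw [iterX K (2*m) (m-i) i (by omega), iterX K (2*m) i (m-i) (by omega),
      map_nsmul, map_mul, map_smul, map_smul,
      piHom_X K m (i + (m-i)) (by omega), piHom_X K m ((m-i) + i) (by omega),
      if_neg (by omega), if_neg (by omega),
      show i + (m-i) - m = 0 by omega, show (m-i) + i - m = 0 by omega]
    rw [smul_mul_smul_comm, ← sq, ← Nat.cast_smul_eq_nsmul K, smul_smul, smul_smul]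
    congr 1
    ring
  rw [Finset.sum_congr rfl hterm, ← Finset.sum_smul, smul_smul, MvPolynomial.smul_eq_C_mul]
  congr 1
  apply congrArg
  rw [Finset.mul_sum, Finset.mul_sum]
  refine Finset.sum_congr rfl fun i hi => ?_
  rw [mem_range] at hi
  have hkey := key K m i (by omega)
  linear_combination ((-1:K)^i / 2) * hkey

end Aux

theorem stmt14 (K : Type) [Field K] [CharZero K] (p m : ℕ) (hm : m = 2 * p) :
    piHom K m (2 * m)
        ((⇑(Δw K (2 * m)))^[m]
          ((1 / 2 : K) • ∑ i ∈ Finset.range (m + 1),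
            ((-1 : K) ^ i) •
              (X ((i : ℕ) : Fin (2 * m + 1)) * X ((m - i : ℕ) : Fin (2 * m + 1)))))
      = MvPolynomial.C ((((2 * p).factorial : K) ^ 2 / 2) *
            ∑ i ∈ Finset.range (2 * p + 1),
              ((-1 : K) ^ i * ((2 * p).choose i : K) * ((4 * p - i).choose (2 * p) : K) *
                ((2 * p + i).choose i : K))) *
          X ((0 : ℕ) : Fin (m + 1)) ^ 2 := by
  subst hm
  rw [show (4:ℕ)*p = 2*(2*p) from by ring]
  exact main K (2*p)
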